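/- Let g₁,...,g_r be elements of the symmetric group S_n generating a transitive subgroup with g₁⋯g_r = 1. Then the quantity g defined by 2(n + g − 1) = Σᵢ ind(gᵢ), where ind(gᵢ) = n minus the number of cycles of gᵢ, is a non-negative integer; i.e., Σᵢ ind(gᵢ) ≥ 2(n−1) and Σᵢ ind(gᵢ) is even. -/

import Mathlib

open Equiv Equiv.Perm Subgroup MulAction

section Merge

variable {α : Type*}

/-- The equivalence relation `r` with the classes of `a` and `b` merged. -/
def mergeSetoid (r : Setoid α) (a b : α) : Setoid α where
  r x y := r.r x y ∨ (r.r x a ∧ r.r b y) ∨ (r.r x b ∧ r.r a y)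
  iseqv := by
    obtain ⟨rrefl, rsymm, rtrans⟩ := r.iseqv
    constructor
    · intro x; exact Or.inl (rrefl x)
    · rintro x y (h | ⟨h1, h2⟩ | ⟨h1, h2⟩)
      · exact Or.inl (rsymm h)
      · exact Or.inr (Or.inr ⟨rsymm h2, rsymm h1⟩)
      · exact Or.inr (Or.inl ⟨rsymm h2, rsymm h1⟩)
    · rintro x y z (h | ⟨h1, h2⟩ | ⟨h1, h2⟩) (h' | ⟨h1', h2'⟩ | ⟨h1', h2'⟩)
      · exact Or.inl (rtrans h h')
      · exact Or.inr (Or.inl ⟨rtrans h h1', h2'⟩)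
      · exact Or.inr (Or.inr ⟨rtrans h h1', h2'⟩)
      · exact Or.inr (Or.inl ⟨h1, rtrans h2 h'⟩)
      · exact Or.inl (rtrans h1 (rtrans (rsymm (rtrans h2 h1')) h2'))
      · exact Or.inl (rtrans h1 h2')
      · exact Or.inr (Or.inr ⟨h1, rtrans h2 h'⟩)
      · exact Or.inl (rtrans h1 h2')
      · exact Or.inr (Or.inr ⟨h1, h2'⟩)

lemma mergeSetoid_rel {r : Setoid α} {a b x y : α} :
    (mergeSetoid r a b).r x y ↔ r.r x y ∨ (r.r x a ∧ r.r b y) ∨ (r.r x b ∧ r.r a y) := Iff.rfl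

lemma le_mergeSetoid (r : Setoid α) (a b : α) : r ≤ mergeSetoid r a b := by
  intro x y h; exact Or.inl h

lemma mergeSetoid_rel_ab (r : Setoid α) (a b : α) : (mergeSetoid r a b).r a b :=
  Or.inr (Or.inl ⟨r.iseqv.refl a, r.iseqv.refl b⟩)

lemma mergeSetoid_eq_self {r : Setoid α} {a b : α} (h : r.r a b) : mergeSetoid r a b = r := by
  apply Setoid.ext
  intro x y
  rw [show (mergeSetoid r a b) x y ↔ (mergeSetoid r a b).r x y from Iff.rfl]
  rw [mergeSetoid_rel]
  constructor
  · rintro (h' | ⟨h1, h2⟩ | ⟨h1, h2⟩)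
    · exact h'
    · exact r.iseqv.trans h1 (r.iseqv.trans h h2)
    · exact r.iseqv.trans h1 (r.iseqv.trans (r.iseqv.symm h) h2)
  · exact fun h' => Or.inl h'

lemma card_quotient_mergeSetoid [Finite α] (r : Setoid α) (a b : α) (hab : ¬ r.r a b) :
    Nat.card (Quotient (mergeSetoid r a b)) + 1 = Nat.card (Quotient r) := by
  classical
  have key : ∀ x y : α, r.r x y → ((if r.r x b then (none : Option (Quotient (mergeSetoid r a b)))
        else some (Quotient.mk _ x)) = (if r.r y b then none else some (Quotient.mk _ y))) := by
    intro x y h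
    by_cases hx : r.r x b
    · rw [if_pos hx, if_pos (r.iseqv.trans (r.iseqv.symm h) hx)]
    · rw [if_neg hx, if_neg (fun hy => hx (r.iseqv.trans h hy))]
      exact congrArg some (Quotient.sound (Or.inl h))
  set θ : Quotient r → Option (Quotient (mergeSetoid r a b)) :=
    Quotient.lift (fun x => if r.r x b then none else some (Quotient.mk _ x)) key with hθ
  have hbij : Function.Bijective θ := by
    constructor
    · intro u v
      induction u using Quotient.inductionOn with | _ x =>
      induction v using Quotient.inductionOn with | _ y =>
      simp only [hθ, Quotient.lift_mk]
      by_cases hx : r.r x b <;> by_cases hy : r.r y b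
      · intro _; exact Quotient.sound (r.iseqv.trans hx (r.iseqv.symm hy))
      · rw [if_pos hx, if_neg hy]; intro h; exact absurd h (by simp)
      · rw [if_neg hx, if_pos hy]; intro h; exact absurd h (by simp)
      · rw [if_neg hx, if_neg hy]
        intro h
        have h' := Quotient.exact (Option.some_injective _ h)
        rcases h' with h' | ⟨h1, h2⟩ | ⟨h1, h2⟩
        · exact Quotient.sound h'
        · exact absurd (r.iseqv.symm h2) hy
        · exact absurd h1 hx
    · intro u
      match u with
      | none => exact ⟨Quotient.mk _ b, by simp [hθ, r.iseqv.refl b]⟩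
      | some v =>
        induction v using Quotient.inductionOn with | _ x =>
        by_cases hx : r.r x b
        · refine ⟨Quotient.mk _ a, ?_⟩
          simp only [hθ, Quotient.lift_mk, if_neg (fun h => hab h)]
          exact congrArg some (Quotient.sound (Or.inr (Or.inl ⟨r.iseqv.refl a, r.iseqv.symm hx⟩)))
        · exact ⟨Quotient.mk _ x, by simp [hθ, hx]⟩
  have hcongr := Nat.card_congr (Equiv.ofBijective θ hbij)
  have hopt : Nat.card (Option (Quotient (mergeSetoid r a b)))
      = Nat.card (Quotient (mergeSetoid r a b)) + 1 := by
    have h2 : Nat.card (Option (Quotient (mergeSetoid r a b)))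
        = Nat.card ((Quotient (mergeSetoid r a b)) ⊕ PUnit.{1}) :=
      Nat.card_congr (Equiv.optionEquivSumPUnit _)
    rw [Nat.card_sum] at h2
    simpa using h2
  omega

/-- Coarsening a setoid cannot increase the number of classes. -/
lemma card_quotient_le_of_le [Finite α] {r s : Setoid α} (h : r ≤ s) :
    Nat.card (Quotient s) ≤ Nat.card (Quotient r) := by
  apply Nat.card_le_card_of_surjective (Quotient.map' id (fun x y hxy => h hxy))
  intro u
  induction u using Quotient.inductionOn with | _ x =>
  exact ⟨Quotient.mk _ x, rfl⟩

end Merge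

section Orbits

variable {n : ℕ}

lemma orbitRel_rel_iff {H : Subgroup (Perm (Fin n))} {x y : Fin n} :
    (orbitRel H (Fin n)).r x y ↔ ∃ h ∈ H, h y = x := by
  change x ∈ orbit H y ↔ _
  rw [mem_orbit_iff]
  constructor
  · rintro ⟨⟨h, hh⟩, rfl⟩; exact ⟨h, hh, rfl⟩
  · rintro ⟨h, hh, rfl⟩; exact ⟨⟨h, hh⟩, rfl⟩

lemma orbitRel_insert_swap (S : Set (Perm (Fin n))) (a b : Fin n) :
    orbitRel (closure (insert (swap a b) S)) (Fin n)
      = mergeSetoid (orbitRel (closure S) (Fin n)) a b := by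
  set r := orbitRel (closure S) (Fin n) with hr
  set m := mergeSetoid r a b with hm
  apply Setoid.ext
  intro x y
  change (orbitRel _ (Fin n)).r x y ↔ m.r x y
  constructor
  · rw [orbitRel_rel_iff]
    rintro ⟨h, hh, rfl⟩
    revert y
    induction hh using Subgroup.closure_induction with
    | mem g hg =>
      intro y
      rcases hg with rfl | hg
      · rcases eq_or_ne y a with rfl | hya
        · rw [swap_apply_left]
          exact m.iseqv.symm (mergeSetoid_rel_ab r y b)
        rcases eq_or_ne y b with rfl | hyb
        · rw [swap_apply_right]
          exact mergeSetoid_rel_ab r a y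
        · rw [swap_apply_of_ne_of_ne hya hyb]
      · exact le_mergeSetoid r a b (orbitRel_rel_iff.mpr ⟨g, subset_closure hg, rfl⟩)
    | one => intro y; exact m.iseqv.refl y
    | mul g g' hg hg' ihg ihg' =>
      intro y
      exact m.iseqv.trans (ihg (g' y)) (ihg' y)
    | inv g hg ihg =>
      intro y
      have := ihg (g⁻¹ y)
      rw [show g (g⁻¹ y) = y from g.apply_symm_apply y] at this
      exact m.iseqv.symm this
  · rintro (h | ⟨h1, h2⟩ | ⟨h1, h2⟩) <;>
    [skip; skip; skip]
    · rw [orbitRel_rel_iff] at h ⊢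
      obtain ⟨h', hh', rfl⟩ := h
      exact ⟨h', closure_mono (Set.subset_insert _ _) hh', rfl⟩
    · -- r x a and r b y
      have hab : (orbitRel (closure (insert (swap a b) S)) (Fin n)).r a b := by
        rw [orbitRel_rel_iff]
        exact ⟨swap a b, subset_closure (Set.mem_insert _ _), swap_apply_right a b⟩
      have hxa : (orbitRel (closure (insert (swap a b) S)) (Fin n)).r x a := by
        rw [orbitRel_rel_iff] at h1 ⊢
        obtain ⟨h', hh', rfl⟩ := h1
        exact ⟨h', closure_mono (Set.subset_insert _ _) hh', rfl⟩
      have hby : (orbitRel (closure (insert (swap a b) S)) (Fin n)).r b y := by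
        rw [orbitRel_rel_iff] at h2 ⊢
        obtain ⟨h', hh', rfl⟩ := h2
        exact ⟨h', closure_mono (Set.subset_insert _ _) hh', rfl⟩
      exact (orbitRel _ _).iseqv.trans hxa ((orbitRel _ _).iseqv.trans hab hby)
    · have hab : (orbitRel (closure (insert (swap a b) S)) (Fin n)).r b a := by
        rw [orbitRel_rel_iff]
        exact ⟨swap a b, subset_closure (Set.mem_insert _ _), swap_apply_left a b⟩
      have hxa : (orbitRel (closure (insert (swap a b) S)) (Fin n)).r x b := by
        rw [orbitRel_rel_iff] at h1 ⊢
        obtain ⟨h', hh', rfl⟩ := h1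
        exact ⟨h', closure_mono (Set.subset_insert _ _) hh', rfl⟩
      have hby : (orbitRel (closure (insert (swap a b) S)) (Fin n)).r a y := by
        rw [orbitRel_rel_iff] at h2 ⊢
        obtain ⟨h', hh', rfl⟩ := h2
        exact ⟨h', closure_mono (Set.subset_insert _ _) hh', rfl⟩
      exact (orbitRel _ _).iseqv.trans hxa ((orbitRel _ _).iseqv.trans hab hby)

lemma card_quotient_orbitRel_bot :
    Nat.card (Quotient (orbitRel (closure (∅ : Set (Perm (Fin n)))) (Fin n))) = n := by
  have hbij : Function.Bijective
      (Quotient.mk (orbitRel (closure (∅ : Set (Perm (Fin n)))) (Fin n))) := by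
    constructor
    · intro x y hxy
      have h : (orbitRel (closure (∅ : Set (Perm (Fin n)))) (Fin n)).r x y := Quotient.exact hxy
      obtain ⟨h', hh', rfl⟩ := orbitRel_rel_iff.mp h
      rw [Subgroup.closure_empty] at hh'
      rw [Subgroup.mem_bot] at hh'
      subst hh'
      rfl
    · intro u
      induction u using Quotient.inductionOn with | _ x =>
      exact ⟨x, rfl⟩
  rw [← Nat.card_congr (Equiv.ofBijective _ hbij)]
  simp

lemma sameCycle_setoid_eq_orbitRel (p : Perm (Fin n)) :
    SameCycle.setoid p = orbitRel (closure ({p} : Set (Perm (Fin n)))) (Fin n) := by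
  apply Setoid.ext
  intro x y
  change SameCycle p x y ↔ (orbitRel _ (Fin n)).r x y
  rw [orbitRel_rel_iff]
  constructor
  · rintro ⟨i, hi⟩
    exact ⟨p ^ (-i), Subgroup.mem_closure_singleton.mpr ⟨-i, rfl⟩, by
      rw [← hi, zpow_neg]; exact Equiv.symm_apply_apply _ _⟩
  · rintro ⟨h, hh, rfl⟩
    obtain ⟨i, rfl⟩ := Subgroup.mem_closure_singleton.mp hh
    exact Equiv.Perm.SameCycle.symm ⟨i, rfl⟩

end Orbits

/-- The number of disjoint cycles of a permutation of `Fin n`,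
counting fixed points as cycles of length 1. -/
def cyclesCount {n : ℕ} (g : Equiv.Perm (Fin n)) : ℕ :=
  Multiset.card g.cycleType + (n - g.support.card)

/-- `ind g = n - (number of cycles of g)`. -/
def ind {n : ℕ} (g : Equiv.Perm (Fin n)) : ℕ :=
  n - cyclesCount g

section CyclesCount

variable {n : ℕ}

lemma two_mul_card_cycleType_le (p : Perm (Fin n)) :
    2 * Multiset.card p.cycleType ≤ p.support.card := by
  have h := Multiset.card_nsmul_le_sum (s := p.cycleType) (a := 2)
      (fun x hx => two_le_of_mem_cycleType hx)
  rw [sum_cycleType] at h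
  simp only [smul_eq_mul] at h
  omega

lemma support_card_le (p : Perm (Fin n)) : p.support.card ≤ n := by
  simpa using Finset.card_le_univ p.support

lemma cyclesCount_le (p : Perm (Fin n)) : cyclesCount p ≤ n := by
  have h1 := two_mul_card_cycleType_le p
  have h2 := support_card_le p
  unfold cyclesCount
  omega

lemma cyclesCount_lt {p : Perm (Fin n)} (hp : p ≠ 1) : cyclesCount p < n := by
  have h1 := two_mul_card_cycleType_le p
  have h2 := support_card_le p
  have h3 : p.support.Nonempty := Finset.nonempty_iff_ne_empty.mpr
      (fun h => hp (support_eq_empty_iff.mp h))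
  have h4 : 1 ≤ p.support.card := Finset.card_pos.mpr h3
  unfold cyclesCount
  omega

lemma cyclesCount_one : cyclesCount (1 : Perm (Fin n)) = n := by
  simp [cyclesCount]

lemma cyclesCount_eq_card_quotient (p : Perm (Fin n)) :
    cyclesCount p = Nat.card (Quotient (SameCycle.setoid p)) := by
  classical
  set T := (↥p.cycleFactorsFinset ⊕ {x : Fin n // x ∉ p.support}) with hT
  have key : ∀ x y : Fin n, SameCycle p x y →
      ((if hx : x ∈ p.support then
          (Sum.inl ⟨p.cycleOf x, cycleOf_mem_cycleFactorsFinset_iff.mpr hx⟩ : T)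
        else Sum.inr ⟨x, hx⟩)
      = (if hy : y ∈ p.support then
          (Sum.inl ⟨p.cycleOf y, cycleOf_mem_cycleFactorsFinset_iff.mpr hy⟩ : T)
        else Sum.inr ⟨y, hy⟩)) := by
    intro x y h
    have hmem : x ∈ p.support ↔ y ∈ p.support := by
      rw [mem_support, mem_support]
      exact not_congr h.apply_eq_self_iff
    by_cases hx : x ∈ p.support
    · rw [dif_pos hx, dif_pos (hmem.mp hx)]
      exact congrArg Sum.inl (Subtype.ext (h.cycleOf_eq))
    · rw [dif_neg hx, dif_neg (fun hy => hx (hmem.mpr hy))]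
      have : x = y := h.eq_of_left (by rwa [mem_support, not_not] at hx)
      subst this; rfl
  set θ : Quotient (SameCycle.setoid p) → T :=
    Quotient.lift (fun x => if hx : x ∈ p.support then
          (Sum.inl ⟨p.cycleOf x, cycleOf_mem_cycleFactorsFinset_iff.mpr hx⟩ : T)
        else Sum.inr ⟨x, hx⟩) key with hθ
  have hbij : Function.Bijective θ := by
    constructor
    · intro u v
      induction u using Quotient.inductionOn with | _ x =>
      induction v using Quotient.inductionOn with | _ y =>
      simp only [hθ, Quotient.lift_mk]
      by_cases hx : x ∈ p.support <;> by_cases hy : y ∈ p.support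
      · rw [dif_pos hx, dif_pos hy]
        intro h
        have hcyc : p.cycleOf x = p.cycleOf y := congrArg Subtype.val (Sum.inl_injective h)
        have hy' : y ∈ (p.cycleOf x).support := by
          rw [hcyc]
          exact mem_support_cycleOf_iff.mpr ⟨SameCycle.refl p y, hy⟩
        exact Quotient.sound (mem_support_cycleOf_iff.mp hy').1
      · rw [dif_pos hx, dif_neg hy]; intro h; exact absurd h (by simp)
      · rw [dif_neg hx, dif_pos hy]; intro h; exact absurd h (by simp)
      · rw [dif_neg hx, dif_neg hy]
        intro h
        have : x = y := congrArg Subtype.val (Sum.inr_injective h)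
        exact congrArg _ this
    · rintro (⟨c, hc⟩ | ⟨x, hx⟩)
      · have hcyc : c.IsCycle := (mem_cycleFactorsFinset_iff.mp hc).1
        obtain ⟨x, hx⟩ := hcyc.nonempty_support
        have hxc : c = p.cycleOf x := cycle_is_cycleOf hx hc
        have hxp : x ∈ p.support := mem_cycleFactorsFinset_support_le hc hx
        refine ⟨Quotient.mk _ x, ?_⟩
        simp only [hθ, Quotient.lift_mk, dif_pos hxp]
        exact congrArg Sum.inl (Subtype.ext hxc.symm)
      · refine ⟨Quotient.mk _ x, ?_⟩
        simp only [hθ, Quotient.lift_mk, dif_neg hx]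
  have hcard := Nat.card_congr (Equiv.ofBijective θ hbij)
  rw [hcard, hT, Nat.card_sum, Nat.card_eq_fintype_card, Nat.card_eq_fintype_card]
  have h1 : Fintype.card ↥p.cycleFactorsFinset = Multiset.card p.cycleType := by
    rw [Fintype.card_coe, cycleType_def, Multiset.card_map]
    rfl
  have h2 : Fintype.card {x : Fin n // x ∉ p.support} = n - p.support.card := by
    have e : {x : Fin n // x ∉ p.support} ≃ ↥(p.supportᶜ) :=
      Equiv.subtypeEquivRight (by simp)
    rw [Fintype.card_congr e, Fintype.card_coe, Finset.card_compl, Fintype.card_fin]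
  rw [h1, h2]
  rfl

end CyclesCount

section SwapMul

variable {n : ℕ}

lemma odd_cyclesCount_swap_mul {a b : Fin n} (hab : a ≠ b) (p : Perm (Fin n)) :
    Odd (cyclesCount (swap a b * p) + cyclesCount p) := by
  set σ := swap a b * p with hσ
  set A := σ.support.card + Multiset.card σ.cycleType with hA
  set B := p.support.card + Multiset.card p.cycleType with hB
  have h1 : ((-1 : ℤˣ)) ^ A = -(-1 : ℤˣ) ^ B := by
    have hsA : sign σ = (-1 : ℤˣ) ^ A := by
      rw [sign_of_cycleType, sum_cycleType]
    have hsB : sign p = (-1 : ℤˣ) ^ B := by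
      rw [sign_of_cycleType, sum_cycleType]
    rw [← hsA, ← hsB, hσ, map_mul, sign_swap hab]
    exact neg_one_mul _
  have h2 : ((-1 : ℤˣ)) ^ (A + B) = -1 := by
    rw [pow_add, h1, neg_mul, ← pow_add, ← two_mul, pow_mul]
    norm_num
  have h3 : Odd (A + B) := by
    rcases Nat.even_or_odd (A + B) with he | ho
    · exfalso
      rw [Even.neg_one_pow he] at h2
      exact absurd h2 (by decide)
    · exact ho
  have h4 := support_card_le σ
  have h5 := support_card_le p
  rw [Nat.odd_iff] at h3 ⊢
  unfold cyclesCount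
  omega

lemma closure_pair_swap_mul (a b : Fin n) (p : Perm (Fin n)) :
    closure ({swap a b * p, swap a b} : Set (Perm (Fin n)))
      = closure ({p, swap a b} : Set (Perm (Fin n))) := by
  apply le_antisymm
  · rw [closure_le]
    rintro x (h | h) <;> rw [h]
    · exact mul_mem (subset_closure (by simp)) (subset_closure (by simp))
    · exact subset_closure (by simp)
  · rw [closure_le]
    rintro x (h | h) <;> rw [h]
    · have h2 : p = swap a b * (swap a b * p) := by rw [swap_mul_self_mul]
      rw [h2]
      exact mul_mem (subset_closure (by simp)) (subset_closure (by simp))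
    · exact subset_closure (by simp)

lemma cyclesCount_swap_mul' {a b : Fin n} (hab : a ≠ b) (p : Perm (Fin n)) :
    (SameCycle p a b → cyclesCount (swap a b * p) = cyclesCount p + 1) ∧
    (¬ SameCycle p a b → cyclesCount (swap a b * p) + 1 = cyclesCount p) := by
  classical
  set σ := swap a b * p with hσ
  set d := Nat.card (Quotient (orbitRel (closure ({p, swap a b} : Set (Perm (Fin n)))) (Fin n)))
    with hd
  have hmerge_p : orbitRel (closure ({p, swap a b} : Set (Perm (Fin n)))) (Fin n)
      = mergeSetoid (SameCycle.setoid p) a b := by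
    rw [show ({p, swap a b} : Set (Perm (Fin n))) = insert (swap a b) {p} from Set.pair_comm _ _,
      orbitRel_insert_swap, ← sameCycle_setoid_eq_orbitRel]
  have hmerge_σ : orbitRel (closure ({p, swap a b} : Set (Perm (Fin n)))) (Fin n)
      = mergeSetoid (SameCycle.setoid σ) a b := by
    rw [← closure_pair_swap_mul a b p,
      show ({σ, swap a b} : Set (Perm (Fin n))) = insert (swap a b) {σ} from Set.pair_comm _ _,
      orbitRel_insert_swap, ← sameCycle_setoid_eq_orbitRel]
  have hP : (SameCycle p a b ∧ d = cyclesCount p)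
      ∨ (¬ SameCycle p a b ∧ d + 1 = cyclesCount p) := by
    by_cases h : SameCycle p a b
    · left
      refine ⟨h, ?_⟩
      rw [cyclesCount_eq_card_quotient, hd, hmerge_p,
        mergeSetoid_eq_self (show (SameCycle.setoid p).r a b from h)]
    · right
      refine ⟨h, ?_⟩
      rw [cyclesCount_eq_card_quotient, hd, hmerge_p]
      exact card_quotient_mergeSetoid (SameCycle.setoid p) a b h
  have hQ : (SameCycle σ a b ∧ d = cyclesCount σ)
      ∨ (¬ SameCycle σ a b ∧ d + 1 = cyclesCount σ) := by
    by_cases h : SameCycle σ a b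
    · left
      refine ⟨h, ?_⟩
      rw [cyclesCount_eq_card_quotient, hd, hmerge_σ,
        mergeSetoid_eq_self (show (SameCycle.setoid σ).r a b from h)]
    · right
      refine ⟨h, ?_⟩
      rw [cyclesCount_eq_card_quotient, hd, hmerge_σ]
      exact card_quotient_mergeSetoid (SameCycle.setoid σ) a b h
  have hodd := odd_cyclesCount_swap_mul hab p
  rw [← hσ] at hodd
  rw [Nat.odd_iff] at hodd
  constructor
  · intro h
    rcases hP with ⟨_, hp⟩ | ⟨h', _⟩
    · rcases hQ with ⟨_, hq⟩ | ⟨_, hq⟩ <;> omega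
    · exact absurd h h'
  · intro h
    rcases hP with ⟨h', _⟩ | ⟨_, hp⟩
    · exact absurd h' h
    · rcases hQ with ⟨_, hq⟩ | ⟨_, hq⟩ <;> omega

end SwapMul

section Decomp

variable {n : ℕ}

lemma exists_swap_list_aux : ∀ (k : ℕ) (p : Perm (Fin n)), p.support.card ≤ k →
    ∃ L : List (Perm (Fin n)), (∀ τ ∈ L, τ.IsSwap) ∧ L.prod = p ∧ L.length = ind p := by
  intro k
  induction k with
  | zero =>
    intro p hp
    have hsupp : p.support = ∅ := Finset.card_eq_zero.mp (Nat.le_zero.mp hp)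
    have h1 : p = 1 := support_eq_empty_iff.mp hsupp
    subst h1
    exact ⟨[], by simp, by simp, by simp [ind, cyclesCount_one]⟩
  | succ k ih =>
    intro p hp
    by_cases h1 : p = 1
    · subst h1
      exact ⟨[], by simp, by simp, by simp [ind, cyclesCount_one]⟩
    · have hne : p.support.Nonempty := Finset.nonempty_iff_ne_empty.mpr
        (fun h => h1 (support_eq_empty_iff.mp h))
      obtain ⟨a, ha⟩ := hne
      have hpa : p a ≠ a := mem_support.mp ha
      have hlt : (swap a (p a) * p).support.card < p.support.card := card_support_swap_mul hpa
      have hcc : cyclesCount (swap a (p a) * p) = cyclesCount p + 1 :=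
        (cyclesCount_swap_mul' (Ne.symm hpa) p).1 ⟨1, by simp⟩
      have hccp := cyclesCount_lt h1
      have hindq : ind (swap a (p a) * p) + 1 = ind p := by
        unfold ind
        omega
      obtain ⟨L, hL1, hL2, hL3⟩ := ih (swap a (p a) * p) (by omega)
      refine ⟨swap a (p a) :: L, ?_, ?_, ?_⟩
      · intro τ hτ
        rcases List.mem_cons.mp hτ with rfl | hτ
        · exact ⟨a, p a, Ne.symm hpa, rfl⟩
        · exact hL1 τ hτ
      · rw [List.prod_cons, hL2, swap_mul_self_mul]
      · rw [List.length_cons, hL3, hindq]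

lemma exists_swap_list (p : Perm (Fin n)) :
    ∃ L : List (Perm (Fin n)), (∀ τ ∈ L, τ.IsSwap) ∧ L.prod = p ∧ L.length = ind p :=
  exists_swap_list_aux p.support.card p le_rfl

lemma main_ineq : ∀ L : List (Perm (Fin n)), (∀ τ ∈ L, τ.IsSwap) →
    n + cyclesCount L.prod ≤ L.length +
      2 * Nat.card (Quotient (orbitRel (closure {x : Perm (Fin n) | x ∈ L}) (Fin n))) := by
  intro L
  induction L with
  | nil =>
    intro _
    have h1 : {x : Perm (Fin n) | x ∈ ([] : List (Perm (Fin n)))} = (∅ : Set (Perm (Fin n))) := by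
      ext x; simp
    rw [h1, List.prod_nil, cyclesCount_one, List.length_nil, card_quotient_orbitRel_bot]
    omega
  | cons τ L ih =>
    intro hswap
    obtain ⟨a, b, hab, rfl⟩ := hswap τ (by simp)
    have ih' := ih (fun τ' hτ' => hswap τ' (by simp [hτ']))
    have hSet : {x : Perm (Fin n) | x ∈ swap a b :: L}
        = insert (swap a b) {x : Perm (Fin n) | x ∈ L} := by
      ext x; simp
    rw [hSet, orbitRel_insert_swap, List.prod_cons, List.length_cons]
    set r := orbitRel (closure {x : Perm (Fin n) | x ∈ L}) (Fin n) with hr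
    set c' := Nat.card (Quotient r) with hc'
    by_cases hrel : r.r a b
    · rw [mergeSetoid_eq_self hrel, ← hc']
      have hcc : cyclesCount (swap a b * L.prod) ≤ cyclesCount L.prod + 1 := by
        by_cases hsc : SameCycle L.prod a b
        · rw [(cyclesCount_swap_mul' hab L.prod).1 hsc]
        · have := (cyclesCount_swap_mul' hab L.prod).2 hsc
          omega
      omega
    · have hmc := card_quotient_mergeSetoid r a b hrel
      have hnsc : ¬ SameCycle L.prod a b := by
        intro hsc
        apply hrel
        obtain ⟨i, hi⟩ := hsc
        refine orbitRel_rel_iff.mpr ⟨L.prod ^ (-i), ?_, ?_⟩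
        · exact zpow_mem (Subgroup.list_prod_mem _ (fun x hx => subset_closure hx)) _
        · rw [← hi, zpow_neg]
          exact Equiv.symm_apply_apply _ _
      have hcc := (cyclesCount_swap_mul' hab L.prod).2 hnsc
      omega

end Decomp

section Final

variable {n : ℕ}

lemma sign_eq_neg_one_pow_ind (p : Perm (Fin n)) : sign p = (-1 : ℤˣ) ^ ind p := by
  have h1 := two_mul_card_cycleType_le p
  have h2 := support_card_le p
  have h3 : p.support.card + Multiset.card p.cycleType
      = ind p + 2 * Multiset.card p.cycleType := by
    unfold ind cyclesCount
    omega
  rw [sign_of_cycleType, sum_cycleType, h3, pow_add, pow_mul]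
  norm_num

/-- Riemann–Hurwitz constraint: for a transitive product-one tuple of
permutations, the total index is even and at least `2(n-1)`. -/
theorem stmt_7 {n r : ℕ} (g : Fin r → Equiv.Perm (Fin n))
    (htrans : ∀ x y : Fin n, ∃ h ∈ Subgroup.closure (Set.range g), h x = y)
    (hprod : (List.ofFn g).prod = 1) :
    2 * (n - 1) ≤ ∑ i, ind (g i) ∧ Even (∑ i, ind (g i)) := by
  constructor
  · -- lower bound
    choose L hL1 hL2 hL3 using fun i => exists_swap_list (g i)
    set LL : List (Perm (Fin n)) := (List.ofFn L).flatten with hLL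
    have hswap : ∀ τ ∈ LL, τ.IsSwap := by
      intro τ hτ
      rw [hLL, List.mem_flatten] at hτ
      obtain ⟨l, hl, hτl⟩ := hτ
      obtain ⟨i, rfl⟩ := List.mem_ofFn.mp hl
      exact hL1 i τ hτl
    have hprodLL : LL.prod = 1 := by
      rw [hLL, List.prod_flatten, List.map_ofFn]
      have : List.prod ∘ L = g := funext fun i => hL2 i
      rw [this, hprod]
    have hlenLL : LL.length = ∑ i, ind (g i) := by
      rw [hLL, List.length_flatten, List.map_ofFn]
      have : List.length ∘ L = fun i => ind (g i) := funext fun i => hL3 i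
      rw [this, List.sum_ofFn]
    have hmain := main_ineq LL hswap
    rw [hprodLL, cyclesCount_one, hlenLL] at hmain
    -- transitivity gives at most one orbit
    have hsub : Subsingleton (Quotient (orbitRel (closure {x : Perm (Fin n) | x ∈ LL}) (Fin n))) := by
      constructor
      intro u v
      induction u using Quotient.inductionOn with | _ x =>
      induction v using Quotient.inductionOn with | _ y =>
      apply Quotient.sound
      have hle : closure (Set.range g) ≤ closure {x : Perm (Fin n) | x ∈ LL} := by
        rw [closure_le]
        rintro _ ⟨i, rfl⟩
        rw [← hL2 i]
        refine Subgroup.list_prod_mem _ (fun x hx => subset_closure ?_)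
        rw [hLL]
        exact List.mem_flatten.mpr ⟨L i, List.mem_ofFn.mpr ⟨i, rfl⟩, hx⟩
      obtain ⟨h, hh, hhy⟩ := htrans y x
      exact orbitRel_rel_iff.mpr ⟨h, hle hh, hhy⟩
    have hcard : Nat.card (Quotient (orbitRel (closure {x : Perm (Fin n) | x ∈ LL}) (Fin n))) ≤ 1 := by
      have : Nat.card PUnit.{1} = 1 := by simp
      rw [← this]
      exact Nat.card_le_card_of_injective (fun _ => PUnit.unit)
        (fun u v _ => Subsingleton.elim u v)
    omega
  · -- parity
    have h2 : ((List.ofFn g).map sign).prod = (1 : ℤˣ) := by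
      rw [List.prod_hom (List.ofFn g) Equiv.Perm.sign, hprod]
      simp
    have h3 : ((List.ofFn g).map sign).prod = (-1 : ℤˣ) ^ (∑ i, ind (g i)) := by
      rw [List.map_ofFn]
      have : sign ∘ g = fun i => (-1 : ℤˣ) ^ ind (g i) :=
        funext fun i => sign_eq_neg_one_pow_ind (g i)
      rw [this, List.prod_ofFn, Finset.prod_pow_eq_pow_sum]
    rw [h2] at h3
    rcases Nat.even_or_odd (∑ i, ind (g i)) with he | ho
    · exact he
    · exfalso
      rw [Odd.neg_one_pow ho] at h3
      exact absurd h3.symm (by decide)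

end Final
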